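/- Let F be a field of characteristic 0 and let W = Der_F(F[t]) be the Witt algebra. Then the centroid of W is F·id: every F-linear map χ : W → W satisfying χ([a,b]) = [χ(a), b] = [a, χ(b)] for all a, b ∈ W is a scalar multiple of the identity. -/
import Mathlib


open Polynomial

private lemma deriv_surj {F : Type*} [Field F] [CharZero F] (r : F[X]) :
    ∃ q : F[X], derivative q = r := by
  induction r using Polynomial.induction_on' with
  | add p q hp hq =>
    obtain ⟨a, ha⟩ := hp; obtain ⟨b, hb⟩ := hq
    exact ⟨a + b, by simp [ha, hb]⟩
  | monomial n a =>
    refine ⟨C (a / (n + 1)) * X ^ (n + 1), ?_⟩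
    have hn : ((n : F) + 1) ≠ 0 := Nat.cast_add_one_ne_zero n
    rw [derivative_C_mul, derivative_X_pow, ← C_mul_X_pow_eq_monomial]
    push_cast
    rw [← mul_assoc, ← C_mul]
    congr 2
    field_simp

/-- In characteristic 0, the centroid of the Witt algebra
`W = Der_F(F[t])` is `F·id`: any `F`-linear `χ : W → W` with
`χ⁅a,b⁆ = ⁅χ a, b⁆ = ⁅a, χ b⁆` is a scalar multiple of the identity. -/
theorem stmt12 {F : Type*} [Field F] [CharZero F]
    (χ : Derivation F F[X] F[X] →ₗ[F] Derivation F F[X] F[X])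
    (h1 : ∀ a b : Derivation F F[X] F[X], χ ⁅a, b⁆ = ⁅χ a, b⁆)
    (h2 : ∀ a b : Derivation F F[X] F[X], χ ⁅a, b⁆ = ⁅a, χ b⁆) :
    ∃ c : F, ∀ a : Derivation F F[X] F[X], χ a = c • a := by
  set D : Derivation F F[X] F[X] := Polynomial.mkDerivation F 1 with hD
  set E : Derivation F F[X] F[X] := Polynomial.mkDerivation F X with hE
  set f : F[X] := (χ D) X with hf
  -- every derivation is mkDerivation of its value at X
  have hrep : ∀ a : Derivation F F[X] F[X], a = Polynomial.mkDerivation F (a X) := by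
    intro a
    exact Polynomial.derivation_ext (Polynomial.mkDerivation_X F (a X)).symm
  -- bracket ⁅E, D⁆ = -D
  have hED : ⁅E, D⁆ = -D := by
    apply Polynomial.derivation_ext
    simp [Derivation.commutator_apply, hD, hE, Polynomial.mkDerivation_apply]
  -- derive derivative f = 0
  have hf0 : derivative f = 0 := by
    have := h2 E D
    rw [hED] at this
    have hX := congrArg (fun d : Derivation F F[X] F[X] => d X) this
    simp only [map_neg, Derivation.neg_apply, Derivation.commutator_apply, ← hf] at hX
    -- hX : -(χ D X) = E (χ D X) - χ D (E X)
    have hEX : E X = X := by rw [hE, Polynomial.mkDerivation_X]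
    rw [hEX, ← hf, hE, Polynomial.mkDerivation_apply] at hX
    rw [smul_eq_mul] at hX
    have h3 : derivative f * X = 0 := by linear_combination -hX
    rcases mul_eq_zero.mp h3 with h | h
    · exact h
    · exact absurd h Polynomial.X_ne_zero
  obtain ⟨c, hc⟩ : ∃ c : F, f = C c := ⟨f.coeff 0, eq_C_of_derivative_eq_zero hf0⟩
  -- χ D = mkDerivation F (C c)
  have hχD : χ D = Polynomial.mkDerivation F (C c) := by rw [hrep (χ D), ← hf, hc]
  -- key derivative relation
  have key : ∀ q : F[X],
      (χ (Polynomial.mkDerivation F (derivative q))) X = c • derivative q := by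
    intro q
    have hbr : ⁅D, Polynomial.mkDerivation F q⁆ = Polynomial.mkDerivation F (derivative q) := by
      apply Polynomial.derivation_ext
      simp [Derivation.commutator_apply, hD, Polynomial.mkDerivation_apply]
    have := h1 D (Polynomial.mkDerivation F q)
    rw [hbr] at this
    have hX := congrArg (fun d : Derivation F F[X] F[X] => d X) this
    simp only [Derivation.commutator_apply] at hX
    rw [hχD] at hX
    simp only [Polynomial.mkDerivation_apply, Polynomial.mkDerivation_X,
      Polynomial.derivative_X, one_smul, derivative_C, zero_smul, sub_zero,
      smul_eq_mul, zero_mul] at hX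
    rw [hX, Polynomial.smul_eq_C_mul]
    simp [derivative_C]
    ring
  -- conclude χ (mkDerivation r) X = c • r for all r
  have key' : ∀ r : F[X], (χ (Polynomial.mkDerivation F r)) X = c • r := by
    intro r
    obtain ⟨q, hq⟩ := deriv_surj r
    rw [← hq]; exact key q
  refine ⟨c, fun a => ?_⟩
  apply Polynomial.derivation_ext
  calc (χ a) X = (χ (Polynomial.mkDerivation F (a X))) X := by rw [← hrep a]
    _ = c • (a X) := key' (a X)
    _ = (c • a) X := by simp
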